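/- Let {w_n} be a sequence bounded in H¹(ℝ) such that for some R > 0, sup_{y ∈ ℝ} ∫_{y−R}^{y+R} w_n² dx → 0 as n → ∞. Then for every r > 2, the L^r norms |w_n|_{L^r} converge to 0 as n → ∞. -/

import Mathlib

open MeasureTheory

noncomputable section

def H1R (g : ℝ → ℝ) : Prop :=
  Differentiable ℝ g ∧ MemLp g 2 ∧ MemLp (deriv g) 2

lemma young_aux (a u v : ℝ) (ha : 0 < a) : 2 * u * v ≤ u ^ 2 / a + a * v ^ 2 := by
  rw [div_add' _ _ _ (ne_of_gt ha), le_div_iff₀ ha]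
  nlinarith [sq_nonneg (u - a * v)]

/-- Pointwise bound: if the local `L²` mass of `g` on every interval of length `2R` is at most
`m` and `∫ (g')² ≤ C0`, then `g x ^ 2 ≤ m / R + m / a + a * C0` for every Young parameter
`a > 0`. -/
lemma pointwise_bound (g : ℝ → ℝ) (hg : H1R g) (R a m C0 : ℝ) (hR : 0 < R) (ha : 0 < a)
    (hm : ∀ y : ℝ, (∫ x in Set.Ioo (y - R) (y + R), g x ^ 2) ≤ m)
    (hC0 : (∫ x : ℝ, deriv g x ^ 2) ≤ C0) (x : ℝ) :
    g x ^ 2 ≤ m / R + m / a + a * C0 := by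
  obtain ⟨hdiff, hgl2, hgdl2⟩ := hg
  have hgc : Continuous g := hdiff.continuous
  have hsq : Integrable (fun t => g t ^ 2) := hgl2.integrable_sq
  have hsq' : Integrable (fun t => deriv g t ^ 2) := hgdl2.integrable_sq
  -- minimum of g² on K = [x - R, x]
  set K := Set.Icc (x - R) x with hK
  have hKne : K.Nonempty := Set.nonempty_Icc.2 (by linarith)
  obtain ⟨z, hzK, hzmin⟩ := isCompact_Icc.exists_isMinOn hKne ((hgc.pow 2).continuousOn)
  have hKsub : K ⊆ Set.Ioo (x - R / 2 - R) (x - R / 2 + R) := by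
    intro t ht
    exact ⟨by linarith [ht.1], by linarith [ht.2, hR]⟩
  have hKm : (∫ t in K, g t ^ 2) ≤ m := by
    refine le_trans
      (setIntegral_mono_set hsq.integrableOn ?_ (HasSubset.Subset.eventuallyLE hKsub))
      (hm (x - R / 2))
    filter_upwards with t using sq_nonneg _
  have hvolK : volume K = ENNReal.ofReal R := by
    rw [hK, Real.volume_Icc]
    congr 1
    ring
  have hz2 : g z ^ 2 ≤ m / R := by
    rw [le_div_iff₀ hR]
    have h1 : g z ^ 2 * R = ∫ t in K, g z ^ 2 := by
      rw [setIntegral_const, Measure.real, hvolK, ENNReal.toReal_ofReal hR.le, smul_eq_mul, mul_comm]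
    rw [h1]
    refine le_trans (setIntegral_mono_on (integrableOn_const ?_) hsq.integrableOn
      measurableSet_Icc fun t ht => hzmin ht) hKm
    rw [hvolK]
    exact ENNReal.ofReal_ne_top
  -- FTC on [z, x]
  have hzx : z ≤ x := hzK.2
  have hderiv2 : ∀ t : ℝ, HasDerivAt (fun u => g u ^ 2) (2 * g t * deriv g t) t := by
    intro t
    have h := ((hdiff t).hasDerivAt).pow 2
    norm_num at h
    exact h
  -- integrability of 2 g g' on uIcc z x
  haveI hfin : IsFiniteMeasure (volume.restrict (Set.uIcc z x)) := by
    constructor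
    rw [Measure.restrict_apply_univ]
    exact isCompact_uIcc.measure_lt_top
  have hd1 : IntegrableOn (deriv g) (Set.uIcc z x) := by
    have h2 : MemLp (deriv g) 2 (volume.restrict (Set.uIcc z x)) := hgdl2.restrict _
    exact memLp_one_iff_integrable.1 (h2.mono_exponent (by norm_num))
  obtain ⟨M, hM⟩ := isCompact_uIcc.exists_bound_of_continuousOn
    ((continuous_const.mul hgc).continuousOn (s := Set.uIcc z x))
  have hint2 : IntegrableOn (fun t => 2 * g t * deriv g t) (Set.uIcc z x) := by
    refine Integrable.bdd_mul (c := M) hd1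
      ((continuous_const.mul hgc).aestronglyMeasurable.restrict) ?_
    rw [ae_restrict_iff' measurableSet_uIcc]
    filter_upwards with t ht using hM t ht
  have hii : IntervalIntegrable (fun t => 2 * g t * deriv g t) volume z x :=
    intervalIntegrable_iff.2 (hint2.mono_set Set.uIoc_subset_uIcc)
  have hftc : (∫ t in z..x, 2 * g t * deriv g t) = g x ^ 2 - g z ^ 2 :=
    intervalIntegral.integral_eq_sub_of_hasDerivAt (fun t _ => hderiv2 t) hii
  -- bound the interval integral
  have hIoc : Set.Ioc z x ⊆ K := fun t ht => ⟨le_trans hzK.1 ht.1.le, ht.2⟩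
  have hIocU : Set.Ioc z x ⊆ Set.uIcc z x := by
    rw [Set.uIcc_of_le hzx]
    exact Set.Ioc_subset_Icc_self
  have hbound : (∫ t in z..x, 2 * g t * deriv g t) ≤ m / a + a * C0 := by
    rw [intervalIntegral.integral_of_le hzx]
    have step1 : (∫ t in Set.Ioc z x, 2 * g t * deriv g t)
        ≤ ∫ t in Set.Ioc z x, (g t ^ 2 / a + a * deriv g t ^ 2) := by
      refine setIntegral_mono_on (hint2.mono_set hIocU)
        ((hsq.integrableOn.div_const a).add (hsq'.integrableOn.const_mul a))
        measurableSet_Ioc fun t _ => young_aux a (g t) (deriv g t) ha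
    have hsplit : (∫ t in Set.Ioc z x, (g t ^ 2 / a + a * deriv g t ^ 2))
        = (∫ t in Set.Ioc z x, g t ^ 2) / a + a * ∫ t in Set.Ioc z x, deriv g t ^ 2 := by
      rw [integral_add (hsq.integrableOn.div_const a) (hsq'.integrableOn.const_mul a),
        integral_div, integral_const_mul]
    have h1 : (∫ t in Set.Ioc z x, g t ^ 2) ≤ m := by
      refine le_trans (setIntegral_mono_set hsq.integrableOn ?_
        (HasSubset.Subset.eventuallyLE hIoc)) hKm
      filter_upwards with t using sq_nonneg _
    have h2 : (∫ t in Set.Ioc z x, deriv g t ^ 2) ≤ C0 := by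
      refine le_trans (setIntegral_le_integral hsq' ?_) hC0
      filter_upwards with t using sq_nonneg _
    have h1' : (∫ t in Set.Ioc z x, g t ^ 2) / a ≤ m / a := by gcongr
    have h2' : a * (∫ t in Set.Ioc z x, deriv g t ^ 2) ≤ a * C0 := by gcongr
    rw [hsplit] at step1
    linarith
  linarith [hz2, hftc, hbound]

/-- Interpolation: a uniform pointwise bound plus an `L²` bound controls the `L^r` integral. -/
lemma integral_rpow_bound (g : ℝ → ℝ) (hg2 : MemLp g 2) (r B C0 : ℝ) (hr : 2 < r)
    (hB : 0 ≤ B) (hC0 : 0 ≤ C0) (hbd : ∀ x, g x ^ 2 ≤ B)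
    (hint : (∫ x : ℝ, g x ^ 2) ≤ C0) :
    (∫ x : ℝ, |g x| ^ r) ≤ B ^ ((r - 2) / 2) * C0 := by
  have hsq : Integrable (fun x => g x ^ 2) := hg2.integrable_sq
  have hpt : ∀ x, |g x| ^ r ≤ B ^ ((r - 2) / 2) * g x ^ 2 := by
    intro x
    rcases eq_or_lt_of_le (abs_nonneg (g x)) with h0 | h0
    · rw [← h0, Real.zero_rpow (by positivity : r ≠ 0)]
      positivity
    · have h1 : |g x| ≤ Real.sqrt B := by
        rw [Real.le_sqrt (abs_nonneg _) hB, sq_abs]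
        exact hbd x
      have h2 : |g x| ^ (r - 2) ≤ B ^ ((r - 2) / 2) := by
        calc |g x| ^ (r - 2) ≤ (Real.sqrt B) ^ (r - 2) :=
              Real.rpow_le_rpow (abs_nonneg _) h1 (by linarith)
          _ = B ^ ((r - 2) / 2) := by
              rw [Real.sqrt_eq_rpow, ← Real.rpow_mul hB]
              congr 1
              ring
      calc |g x| ^ r = |g x| ^ (r - 2) * |g x| ^ (2 : ℝ) := by
            rw [← Real.rpow_add h0]
            congr 1
            ring
        _ = |g x| ^ (r - 2) * g x ^ 2 := by rw [Real.rpow_two, sq_abs]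
        _ ≤ B ^ ((r - 2) / 2) * g x ^ 2 :=
            mul_le_mul_of_nonneg_right h2 (sq_nonneg _)
  calc (∫ x : ℝ, |g x| ^ r) ≤ ∫ x : ℝ, B ^ ((r - 2) / 2) * g x ^ 2 := by
        refine integral_mono_of_nonneg ?_ (hsq.const_mul _) ?_
        · filter_upwards with x using Real.rpow_nonneg (abs_nonneg _) r
        · filter_upwards with x using hpt x
    _ = B ^ ((r - 2) / 2) * ∫ x : ℝ, g x ^ 2 := integral_const_mul _ _
    _ ≤ B ^ ((r - 2) / 2) * C0 :=
        mul_le_mul_of_nonneg_left hint (Real.rpow_nonneg hB _)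

/-- Lions' vanishing lemma on `ℝ`: if a bounded sequence in `H¹(ℝ)` has uniformly
vanishing local `L²` mass, then it tends to `0` in every `L^r` with `r > 2`. -/
theorem vanishing_lemma (w : ℕ → ℝ → ℝ) (hw : ∀ n, H1R (w n))
    (C : ℝ)
    (hbdd : ∀ n, (∫ x : ℝ, (w n x) ^ 2) + (∫ x : ℝ, (deriv (w n) x) ^ 2) ≤ C)
    (R : ℝ) (hR : 0 < R)
    (hvan : Filter.Tendsto
      (fun n => ⨆ y : ℝ, ∫ x in Set.Ioo (y - R) (y + R), (w n x) ^ 2)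
      Filter.atTop (nhds 0)) :
    ∀ r : ℝ, 2 < r →
      Filter.Tendsto (fun n => ∫ x : ℝ, |w n x| ^ r) Filter.atTop (nhds 0) := by
  intro r hr
  have hs : (0 : ℝ) < (r - 2) / 2 := by linarith
  have hCn : ∀ n, (∫ x : ℝ, w n x ^ 2) ≤ C ∧ (∫ x : ℝ, deriv (w n) x ^ 2) ≤ C := by
    intro n
    have h1 : (0 : ℝ) ≤ ∫ x : ℝ, w n x ^ 2 := integral_nonneg fun x => sq_nonneg _
    have h2 : (0 : ℝ) ≤ ∫ x : ℝ, deriv (w n) x ^ 2 := integral_nonneg fun x => sq_nonneg _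
    exact ⟨by linarith [hbdd n], by linarith [hbdd n]⟩
  have hC : (0 : ℝ) ≤ C := by
    have h1 : (0 : ℝ) ≤ ∫ x : ℝ, w 0 x ^ 2 := integral_nonneg fun x => sq_nonneg _
    have h2 : (0 : ℝ) ≤ ∫ x : ℝ, deriv (w 0) x ^ 2 := integral_nonneg fun x => sq_nonneg _
    linarith [hbdd 0]
  rw [Metric.tendsto_atTop] at hvan ⊢
  intro ε hε
  -- choose B > 0 with B ^ ((r-2)/2) * C < ε
  have hcont : Filter.Tendsto (fun t : ℝ => t ^ ((r - 2) / 2) * C) (nhds 0) (nhds 0) := by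
    have h := (Real.continuousAt_rpow_const 0 ((r - 2) / 2) (Or.inr hs.le)).mul
      (continuousAt_const (y := C))
    have h0 : (0 : ℝ) ^ ((r - 2) / 2) * C = 0 := by
      rw [Real.zero_rpow hs.ne', zero_mul]
    have h' := h.tendsto
    simpa [h0, Pi.mul_def] using h'
  obtain ⟨δ, hδ, hδ'⟩ := Metric.tendsto_nhds_nhds.1 hcont ε hε
  set B := δ / 2 with hB_def
  have hB : 0 < B := by positivity
  have hBε : B ^ ((r - 2) / 2) * C < ε := by
    have h := hδ' (x := B) (by
      rw [Real.dist_eq, sub_zero, abs_of_pos hB]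
      rw [hB_def]
      linarith)
    rwa [Real.dist_eq, sub_zero,
      abs_of_nonneg (mul_nonneg (Real.rpow_nonneg hB.le _) hC)] at h
  set a := B / (3 * (C + 1)) with ha_def
  have ha : 0 < a := by positivity
  have hδ2 : 0 < min (R * B / 3) (a * B / 3) :=
    lt_min (by positivity) (by positivity)
  obtain ⟨N, hN⟩ := hvan _ hδ2
  refine ⟨N, fun n hn => ?_⟩
  set M := (⨆ y : ℝ, ∫ x in Set.Ioo (y - R) (y + R), w n x ^ 2) with hM_def
  have hMδ : M < min (R * B / 3) (a * B / 3) := by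
    have h := hN n hn
    rw [Real.dist_eq, sub_zero] at h
    exact lt_of_le_of_lt (le_abs_self _) h
  have hsq : Integrable (fun x => w n x ^ 2) := (hw n).2.1.integrable_sq
  have hub : ∀ y : ℝ, (∫ x in Set.Ioo (y - R) (y + R), w n x ^ 2) ≤ M := by
    intro y
    refine le_ciSup (f := fun y : ℝ => ∫ x in Set.Ioo (y - R) (y + R), w n x ^ 2)
      ⟨∫ x : ℝ, w n x ^ 2, ?_⟩ y
    rintro v ⟨y', rfl⟩
    exact setIntegral_le_integral hsq (Filter.Eventually.of_forall fun x => sq_nonneg _)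
  have hbd : ∀ x, w n x ^ 2 ≤ B := by
    intro x
    have h := pointwise_bound (w n) (hw n) R a M C hR ha hub (hCn n).2 x
    have hMa : M ≤ R * B / 3 := le_trans hMδ.le (min_le_left _ _)
    have hMb : M ≤ a * B / 3 := le_trans hMδ.le (min_le_right _ _)
    have h1 : M / R ≤ B / 3 := by rw [div_le_iff₀ hR]; linarith
    have h2 : M / a ≤ B / 3 := by rw [div_le_iff₀ ha]; linarith
    have h3 : a * C ≤ B / 3 := by
      rw [ha_def, div_mul_eq_mul_div, div_le_iff₀ (by positivity : (0 : ℝ) < 3 * (C + 1))]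
      nlinarith [hB.le, hC]
    linarith
  have hfinal := integral_rpow_bound (w n) (hw n).2.1 r B C hr hB.le hC hbd (hCn n).1
  have hnonneg : (0 : ℝ) ≤ ∫ x : ℝ, |w n x| ^ r :=
    integral_nonneg fun x => Real.rpow_nonneg (abs_nonneg _) r
  rw [Real.dist_eq, sub_zero, abs_of_nonneg hnonneg]
  exact lt_of_le_of_lt hfinal hBε
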